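/- In a δ-hyperbolic geodesic metric space X, for any isometry g, the stable length satisfies length^∞(g) ≥ transl(g) − 8δ, where transl(g) is the translation length. -/

import Mathlib

open Filter Topology Set

/-- `f : ℝ → X` is a geodesic segment from `x` to `y`, parametrized by arclength
on the interval `[0, dist x y]`. -/
def IsGeodesicSegment {X : Type*} [MetricSpace X] (f : ℝ → X) (x y : X) : Prop :=
  f 0 = x ∧ f (dist x y) = y ∧
    ∀ s ∈ Icc (0 : ℝ) (dist x y), ∀ t ∈ Icc (0 : ℝ) (dist x y),
      dist (f s) (f t) = |s - t|

lemma IsGeodesicSegment.rev {X : Type*} [MetricSpace X] {f : ℝ → X} {x y : X}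
    (hf : IsGeodesicSegment f x y) :
    IsGeodesicSegment (fun t => f (dist x y - t)) y x := by
  obtain ⟨h0, h1, hd⟩ := hf
  refine ⟨by simpa using h1, ?_, ?_⟩
  · rw [dist_comm]; simpa using h0
  · intro s hs t ht
    rw [dist_comm y x] at hs ht
    have h1 : dist x y - s ∈ Icc (0:ℝ) (dist x y) := ⟨by linarith [hs.2], by linarith [hs.1]⟩
    have h2 : dist x y - t ∈ Icc (0:ℝ) (dist x y) := ⟨by linarith [ht.2], by linarith [ht.1]⟩
    rw [hd _ h1 _ h2, ← abs_neg]
    ring_nf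

lemma IsGeodesicSegment.comp {X : Type*} [MetricSpace X] {f : ℝ → X} {x y : X}
    (h : X ≃ᵢ X) (hf : IsGeodesicSegment f x y) :
    IsGeodesicSegment (fun t => h (f t)) (h x) (h y) := by
  obtain ⟨h0, h1, hd⟩ := hf
  have hdist : dist (h x) (h y) = dist x y := h.dist_eq x y
  refine ⟨by simp [h0], by simp [hdist, h1], ?_⟩
  intro s hs t ht
  rw [hdist] at hs ht
  rw [h.dist_eq, hd _ hs _ ht]

lemma key_midpoint {X : Type*} [MetricSpace X] (δ : ℝ) (hδ : 0 ≤ δ)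
    (hgeo : ∀ x y : X, ∃ f : ℝ → X, IsGeodesicSegment f x y)
    (hthin : ∀ (x y z : X) (f₁ f₂ f₃ : ℝ → X),
      IsGeodesicSegment f₁ x y → IsGeodesicSegment f₂ y z → IsGeodesicSegment f₃ x z →
      ∀ s ∈ Icc (0 : ℝ) (dist x y), ∃ p : X,
        ((∃ t ∈ Icc (0 : ℝ) (dist y z), p = f₂ t) ∨
          (∃ t ∈ Icc (0 : ℝ) (dist x z), p = f₃ t)) ∧ dist (f₁ s) p ≤ δ)
    (h : X ≃ᵢ X) (m : X) :
    2 * (⨅ x : X, dist x (h x)) - 4 * δ ≤ dist m (h (h m)) := by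
  have hne : Nonempty X := ⟨m⟩
  obtain ⟨f₁, hf₁⟩ := hgeo m (h m)
  obtain ⟨f₃, hf₃⟩ := hgeo m (h (h m))
  set D := dist m (h m) with hD
  set E := dist m (h (h m)) with hE
  have hD0 : 0 ≤ D := dist_nonneg
  have hE0 : 0 ≤ E := dist_nonneg
  have hDE : dist (h m) (h (h m)) = D := h.dist_eq m (h m)
  set f₂ : ℝ → X := fun t => h (f₁ t) with hf₂def
  have hf₂ : IsGeodesicSegment f₂ (h m) (h (h m)) := hf₁.comp h
  set m' := f₁ (D/2) with hm'
  have hhm' : h m' = f₂ (D/2) := rfl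
  have hmemD : D/2 ∈ Icc (0:ℝ) D := ⟨by linarith, by linarith⟩
  have hmem0 : (0:ℝ) ∈ Icc (0:ℝ) D := ⟨le_refl _, hD0⟩
  have hmemDD : D ∈ Icc (0:ℝ) D := ⟨hD0, le_refl _⟩
  -- basic distances
  have d1 : dist m m' = D / 2 := by
    have := hf₁.2.2 0 hmem0 (D/2) hmemD
    rw [hf₁.1] at this
    rw [this]; rw [abs_of_nonpos (by linarith)]; ring
  have d2 : dist m' (h m) = D / 2 := by
    have := hf₁.2.2 (D/2) hmemD D hmemDD
    rw [hf₁.2.1] at this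
    rw [this, abs_of_nonpos (by linarith)]; ring
  have d3 : dist (h m) (h m') = D / 2 := by rw [h.dist_eq]; exact d1
  have d2' : dist (h m) m' = D / 2 := by rw [dist_comm]; exact d2
  have d4 : dist (h m') (h (h m)) = D / 2 := by rw [h.dist_eq]; exact d2
  set u := dist m' (h m') with hu
  have hTu : (⨅ x : X, dist x (h x)) ≤ u :=
    ciInf_le ⟨0, by rintro _ ⟨x, rfl⟩; exact dist_nonneg⟩ m'
  have hsuff : u ≤ E / 2 + 2 * δ := by
    obtain ⟨p, hp, hdp⟩ := hthin m (h m) (h (h m)) f₁ f₂ f₃ hf₁ hf₂ hf₃ (D/2) hmemD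
    rw [← hm'] at hdp
    rcases hp with ⟨t, ht, rfl⟩ | ⟨t, ht, rfl⟩
    · -- p on the side [h m, h² m]
      rw [hDE] at ht
      have dtp : dist (h m) (f₂ t) = t := by
        have := hf₂.2.2 0 (by rw [hDE]; exact ⟨le_refl _, hD0⟩) t (by rw [hDE]; exact ht)
        rw [hf₂.1] at this
        rw [this, abs_of_nonpos (by linarith [ht.1])]; ring
      have dtm : dist (f₂ t) (h m') = |t - D/2| := by
        rw [hhm']
        exact hf₂.2.2 t (by rw [hDE]; exact ht) (D/2) (by rw [hDE]; exact hmemD)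
      have hdp' : dist (f₂ t) m' ≤ δ := by rw [dist_comm]; exact hdp
      have h1 : t ≤ D/2 + δ := by
        have := dist_triangle (h m) m' (f₂ t)
        linarith [dtp, d2', hdp]
      have h2 : D/2 - δ ≤ t := by
        have := dist_triangle (h m) (f₂ t) m'
        linarith [dtp, d2', hdp']
      have habs : |t - D/2| ≤ δ := abs_le.mpr ⟨by linarith, by linarith⟩
      have := dist_triangle m' (f₂ t) (h m')
      rw [dtm] at this
      calc u ≤ dist m' (f₂ t) + |t - D/2| := this
        _ ≤ δ + δ := add_le_add hdp habs
        _ ≤ E/2 + 2*δ := by linarith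
    · -- p = f₃ t on the side [m, h² m]
      -- second application of thinness, to the point h m' on side [h m, h² m]
      obtain ⟨q, hq, hdq⟩ := hthin (h m) (h (h m)) m f₂
        (fun s => f₃ (dist m (h (h m)) - s)) (fun s => f₁ (dist m (h m) - s))
        hf₂ hf₃.rev hf₁.rev (D/2) (by rw [hDE]; exact hmemD)
      rw [← hhm'] at hdq
      rcases hq with ⟨t₂, ht₂, rfl⟩ | ⟨t₂, ht₂, rfl⟩
      · -- q = f₃ (E - t₂) : main case
        rw [dist_comm (h (h m)) m, ← hE] at ht₂
        set t' := E - t₂ with ht'def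
        have ht' : t' ∈ Icc (0:ℝ) E := ⟨by simp [ht'def]; linarith [ht₂.2], by simp [ht'def]; linarith [ht₂.1]⟩
        have hq' : f₃ (dist m (h (h m)) - t₂) = f₃ t' := by rw [← hE]
        rw [hq'] at hdq
        have hmem0E : (0:ℝ) ∈ Icc (0:ℝ) E := ⟨le_refl _, hE0⟩
        have hmemEE : E ∈ Icc (0:ℝ) E := ⟨hE0, le_refl _⟩
        have dmp : dist m (f₃ t) = t := by
          have := hf₃.2.2 0 hmem0E t ht
          rw [hf₃.1] at this
          rw [this, abs_of_nonpos (by linarith [ht.1])]; ring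
        have dph : dist (f₃ t) (h (h m)) = E - t := by
          have := hf₃.2.2 t ht E hmemEE
          rw [hf₃.2.1] at this
          rw [this, abs_of_nonpos (by linarith [ht.2])]; ring
        have dmq : dist m (f₃ t') = t' := by
          have := hf₃.2.2 0 hmem0E t' ht'
          rw [hf₃.1] at this
          rw [this, abs_of_nonpos (by linarith [ht'.1])]; ring
        have dqh : dist (f₃ t') (h (h m)) = E - t' := by
          have := hf₃.2.2 t' ht' E hmemEE
          rw [hf₃.2.1] at this
          rw [this, abs_of_nonpos (by linarith [ht'.2])]; ring
        have dpq : dist (f₃ t) (f₃ t') = |t - t'| := hf₃.2.2 t ht t' ht'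
        -- (i) D/2 - δ ≤ t
        have i1 : D/2 - δ ≤ t := by
          have := dist_triangle m (f₃ t) m'
          rw [dmp, dist_comm (f₃ t) m'] at this
          linarith [d1, hdp]
        -- (ii) t ≤ E - D/2 + δ
        have i2 : t ≤ E - D/2 + δ := by
          have h1 : dist (h m) (h (h m)) ≤ dist (h m) m' + dist m' (h (h m)) := dist_triangle _ _ _
          have h2 : dist m' (h (h m)) ≤ dist m' (f₃ t) + dist (f₃ t) (h (h m)) := dist_triangle _ _ _
          rw [hDE] at h1
          rw [dist_comm (h m) m'] at h1
          linarith [d2, dph, hdp]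
        -- (iii) D/2 - δ ≤ t'
        have i3 : D/2 - δ ≤ t' := by
          have h1 : dist m (h m) ≤ dist m (h m') + dist (h m') (h m) := dist_triangle _ _ _
          have h2 : dist m (h m') ≤ dist m (f₃ t') + dist (f₃ t') (h m') := dist_triangle _ _ _
          rw [dist_comm (h m') (h m)] at h1
          rw [dist_comm (f₃ t') (h m')] at h2
          linarith [d3, dmq, hdq, hD.symm ▸ h1]
        -- (iv) t' ≤ E - D/2 + δ
        have i4 : t' ≤ E - D/2 + δ := by
          have h1 : dist (h m') (h (h m)) ≤ dist (h m') (f₃ t') + dist (f₃ t') (h (h m)) := dist_triangle _ _ _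
          linarith [d4, dqh, hdq]
        -- (v) u ≤ 2δ + |t - t'|
        have v : u ≤ 2*δ + |t - t'| := by
          have h1 : u ≤ dist m' (f₃ t) + dist (f₃ t) (h m') := dist_triangle _ _ _
          have h2 : dist (f₃ t) (h m') ≤ dist (f₃ t) (f₃ t') + dist (f₃ t') (h m') := dist_triangle _ _ _
          rw [dist_comm (f₃ t') (h m')] at h2
          rw [dpq] at h2
          linarith [hdp, hdq]
        -- (vi) u ≤ D
        have vi : u ≤ D := by
          have h1 : u ≤ dist m' (h m) + dist (h m) (h m') := dist_triangle _ _ _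
          linarith [d2, d3]
        have habs : |t - t'| ≤ E - D + 2*δ := abs_sub_le_iff.mpr ⟨by linarith, by linarith⟩
        linarith
      · -- q on side [h m, m] : u ≤ 2δ
        rw [dist_comm (h m) m, ← hD] at ht₂
        set s₂ := D - t₂ with hs₂def
        have hs₂ : s₂ ∈ Icc (0:ℝ) D := ⟨by simp [hs₂def]; linarith [ht₂.2], by simp [hs₂def]; linarith [ht₂.1]⟩
        have hq' : f₁ (dist m (h m) - t₂) = f₁ s₂ := by rw [← hD]
        rw [hq'] at hdq
        have dhq : dist (h m) (f₁ s₂) = t₂ := by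
          have := hf₁.2.2 D hmemDD s₂ hs₂
          rw [hf₁.2.1] at this
          rw [this, show D - s₂ = t₂ by rw [hs₂def]; ring]
          exact abs_of_nonneg ht₂.1
        have dm'q : dist m' (f₁ s₂) = |D/2 - s₂| := hf₁.2.2 (D/2) hmemD s₂ hs₂
        have h1 : t₂ ≤ D/2 + δ := by
          have := dist_triangle (h m) (h m') (f₁ s₂)
          linarith [d3, hdq, dhq]
        have h2 : D/2 - δ ≤ t₂ := by
          have := dist_triangle (h m) (f₁ s₂) (h m')
          rw [dist_comm (f₁ s₂) (h m')] at this
          linarith [d3, hdq, dhq]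
        have habs : |D/2 - s₂| ≤ δ := by
          rw [hs₂def]
          rw [show D/2 - (D - t₂) = t₂ - D/2 by ring]
          exact abs_le.mpr ⟨by linarith, by linarith⟩
        have h3 : u ≤ dist m' (f₁ s₂) + dist (f₁ s₂) (h m') := dist_triangle _ _ _
        rw [dist_comm (f₁ s₂) (h m')] at h3
        rw [dm'q] at h3
        linarith [hdq]
  linarith

noncomputable def itersq {X : Type*} [MetricSpace X] (g : X ≃ᵢ X) : ℕ → X ≃ᵢ X
  | 0 => g
  | n+1 => (itersq g n).trans (itersq g n)

lemma itersq_apply {X : Type*} [MetricSpace X] (g : X ≃ᵢ X) :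
    ∀ (n : ℕ) (x : X), itersq g n x = g^[2^n] x := by
  intro n
  induction n with
  | zero => intro x; simp [itersq]
  | succ n ih =>
    intro x
    have : itersq g (n+1) x = itersq g n (itersq g n x) := rfl
    rw [this, ih, ih, pow_succ, mul_two, Function.iterate_add_apply]

/-- In a geodesic metric space `X` which is `δ`-hyperbolic (every geodesic triangle is
`δ`-thin: each side lies in the `δ`-neighbourhood of the union of the other two sides),
for any isometry `g` of `X` the stable length `length^∞(g) = lim_k d(m, g^k·m)/k`
satisfies `length^∞(g) ≥ transl(g) − 8δ`, where `transl(g) = inf_x d(x, g·x)` is the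
translation length of `g`. -/
theorem stable_length_ge_translation_length_sub_of_hyperbolic
    {X : Type*} [MetricSpace X] (δ : ℝ) (hδ : 0 ≤ δ)
    (hgeo : ∀ x y : X, ∃ f : ℝ → X, IsGeodesicSegment f x y)
    (hthin : ∀ (x y z : X) (f₁ f₂ f₃ : ℝ → X),
      IsGeodesicSegment f₁ x y → IsGeodesicSegment f₂ y z → IsGeodesicSegment f₃ x z →
      ∀ s ∈ Icc (0 : ℝ) (dist x y), ∃ p : X,
        ((∃ t ∈ Icc (0 : ℝ) (dist y z), p = f₂ t) ∨
          (∃ t ∈ Icc (0 : ℝ) (dist x z), p = f₃ t)) ∧ dist (f₁ s) p ≤ δ)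
    (g : X ≃ᵢ X) (m₀ : X) (L : ℝ)
    (hL : Tendsto (fun k : ℕ => dist m₀ (g^[k] m₀) / k) atTop (𝓝 L)) :
    (⨅ x : X, dist x (g x)) - 8 * δ ≤ L := by
  have hne : Nonempty X := ⟨m₀⟩
  have hbdd : ∀ h : X ≃ᵢ X, BddBelow (range fun x : X => dist x (h x)) :=
    fun h => ⟨0, by rintro _ ⟨x, rfl⟩; exact dist_nonneg⟩
  set T := ⨅ x : X, dist x (g x) with hT
  -- squaring step
  have step : ∀ h : X ≃ᵢ X,
      2 * (⨅ x : X, dist x (h x)) - 4 * δ ≤ ⨅ x : X, dist x ((h.trans h) x) := by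
    intro h
    refine le_ciInf fun m => ?_
    exact key_midpoint δ hδ hgeo hthin h m
  -- by induction
  set Tn := fun n : ℕ => ⨅ x : X, dist x (itersq g n x) with hTn
  have ind : ∀ n : ℕ, (2:ℝ)^n * (T - 4 * δ) + 4 * δ ≤ Tn n := by
    intro n
    induction n with
    | zero => simp [hTn, itersq, hT]
    | succ n ih =>
      have h1 : 2 * Tn n - 4 * δ ≤ Tn (n+1) := step (itersq g n)
      have h3 := mul_le_mul_of_nonneg_left ih (by norm_num : (0:ℝ) ≤ 2)
      have h4 : (2:ℝ)^(n+1) * (T - 4 * δ) = 2 * (2^n * (T - 4 * δ)) := by ring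
      linarith
  -- lower bound along the subsequence 2^n
  have hbound : ∀ n : ℕ, T - 8 * δ ≤ dist m₀ (g^[2^n] m₀) / ((2^n : ℕ) : ℝ) := by
    intro n
    have h1 : Tn n ≤ dist m₀ (itersq g n m₀) := ciInf_le (hbdd (itersq g n)) m₀
    rw [itersq_apply] at h1
    have h2 : (2:ℝ)^n * (T - 4 * δ) + 4 * δ ≤ dist m₀ (g^[2^n] m₀) := le_trans (ind n) h1
    have h3 : (0:ℝ) < (2:ℝ)^n := by positivity
    have h4 : ((2^n : ℕ) : ℝ) = (2:ℝ)^n := by push_cast; ring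
    rw [h4, le_div_iff₀ h3]
    nlinarith [h3]
  -- pass to the limit
  have hmono : Tendsto (fun n : ℕ => (2:ℕ)^n) atTop atTop :=
    tendsto_atTop_mono (fun n => (Nat.lt_two_pow_self (n := n)).le) tendsto_id
  have hsub : Tendsto (fun n : ℕ => dist m₀ (g^[2^n] m₀) / ((2^n : ℕ) : ℝ)) atTop (𝓝 L) :=
    hL.comp hmono
  exact ge_of_tendsto' hsub hbound
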